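/- Let p be a prime, k a commutative ring, and v a valuation on k with values in a linearly ordered commutative group with zero Γ₀ (multiplicative notation). Let x, y ∈ 𝕎 k be p-typical Witt vectors and n a natural number such that v(x.coeff i) ≤ 1 and v(y.coeff i) ≤ 1 for all i ≤ n. Then v((x·y).coeff n) ≤ (max_{i≤n} v(x.coeff i)) · (max_{j≤n} v(y.coeff j)). -/

import Mathlib

open MvPolynomial

/-- Every monomial of `wittMul p n` contains a variable from each of the two blocks. -/
lemma wittMul_support_exists (p : ℕ) [Fact p.Prime] (n : ℕ) (a : Fin 2)
    {d : (Fin 2 × ℕ) →₀ ℕ} (hd : d ∈ (WittVector.wittMul p n).support) :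
    ∃ i, (a, i) ∈ d.support := by
  classical
  by_contra h
  push_neg at h
  have hda : ∀ s ∈ d.support, s.1 ≠ a := by
    rintro ⟨b, i⟩ hs rfl
    exact h i hs
  set R := MvPolynomial (Fin 2 × ℕ) ℤ
  set g : Fin 2 × ℕ → R := fun s => if s.1 = a then 0 else X s with hg
  -- the evaluation with the `a`-block set to zero vanishes
  have hzero : aeval g (WittVector.wittMul p n) = 0 := by
    have hkey := WittVector.mul_coeff (p := p)
      (WittVector.mk p fun i => g (0, i)) (WittVector.mk p fun i => g (1, i)) n
    have hone : (WittVector.mk p fun i => g ((a : Fin 2), i)) = 0 := by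
      refine WittVector.ext fun i => ?_
      rw [WittVector.zero_coeff, WittVector.coeff_mk]
      simp [hg]
    have ha : a = 0 ∨ a = 1 := by
      rcases a with ⟨_ | _ | _, ha⟩
      · left; rfl
      · right; rfl
      · omega
    have hprod : (WittVector.mk p fun i => g (0, i)) *
        (WittVector.mk p fun i => g (1, i)) = 0 := by
      rcases ha with rfl | rfl
      · rw [hone, zero_mul]
      · rw [hone, mul_zero]
    have huncurry : (Function.uncurry
        ![(WittVector.mk p fun i => g (0, i)).coeff,
          (WittVector.mk p fun i => g (1, i)).coeff]) = g := by
      funext s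
      obtain ⟨b, i⟩ := s
      fin_cases b <;> simp [Function.uncurry, WittVector.coeff_mk]
    rw [hprod, WittVector.zero_coeff] at hkey
    rw [WittVector.peval, huncurry] at hkey
    exact hkey.symm
  -- but the coefficient of `d` survives that substitution
  have hcoeff : coeff d (aeval g (WittVector.wittMul p n))
      = coeff d (WittVector.wittMul p n) := by
    conv_lhs => rw [(WittVector.wittMul p n).as_sum]
    rw [map_sum, coeff_sum]
    rw [Finset.sum_eq_single d]
    · rw [aeval_monomial]
      have hpr : (d.prod fun s e => g s ^ e) = d.prod fun s e => (X s : R) ^ e :=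
        Finsupp.prod_congr fun s hs => by rw [hg]; simp [hda s hs]
      rw [hpr, algebraMap_eq, ← monomial_eq, coeff_monomial, if_pos rfl]
    · intro e _ hne
      rw [aeval_monomial]
      by_cases hcase : ∃ s ∈ e.support, s.1 = a
      · obtain ⟨s0, hs0, hs0a⟩ := hcase
        have hpr : (e.prod fun s m => g s ^ m) = 0 := by
          refine Finset.prod_eq_zero hs0 ?_
          rw [hg]
          simp [hs0a, zero_pow (Finsupp.mem_support_iff.mp hs0)]
        rw [hpr, mul_zero, coeff_zero]
      · push_neg at hcase
        have hpr : (e.prod fun s m => g s ^ m) = e.prod fun s m => (X s : R) ^ m :=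
          Finsupp.prod_congr fun s hs => by rw [hg]; simp [hcase s hs]
        rw [hpr, algebraMap_eq, ← monomial_eq, coeff_monomial, if_neg hne]
    · intro hnd
      exact absurd hd hnd
  rw [hzero, coeff_zero] at hcoeff
  exact MvPolynomial.mem_support_iff.mp hd hcoeff.symm

lemma val_intCast_le_one {k : Type*} [CommRing k]
    {Γ₀ : Type*} [LinearOrderedCommGroupWithZero Γ₀] (v : Valuation k Γ₀) (m : ℤ) :
    v (m : k) ≤ 1 := by
  induction m using Int.induction_on with
  | zero => simp
  | succ i ih =>
      have h1 : ((i + 1 : ℤ) : k) = ((i : ℤ) : k) + 1 := by push_cast; ring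
      rw [h1]; exact v.map_add_le ih (le_of_eq v.map_one)
  | pred i ih =>
      have h1 : ((-i - 1 : ℤ) : k) = ((-i : ℤ) : k) + (-1) := by push_cast; ring
      rw [h1]
      refine v.map_add_le ih ?_
      rw [show ((-1 : k)) = -(1 : k) by ring, v.map_neg, v.map_one]

/-- Truncated valuation estimate for products of Witt vectors, integral case:
if `v (x.coeff i) ≤ 1` and `v (y.coeff i) ≤ 1` for all `i ≤ n`, then
`v ((x*y).coeff n) ≤ (max_{i ≤ n} v (x.coeff i)) * (max_{j ≤ n} v (y.coeff j))`. -/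
theorem stmt15 (p : ℕ) [Fact p.Prime] {k : Type*} [CommRing k]
    {Γ₀ : Type*} [LinearOrderedCommGroupWithZero Γ₀] (v : Valuation k Γ₀)
    (x y : WittVector p k) (n : ℕ)
    (hx : ∀ i ≤ n, v (x.coeff i) ≤ 1) (hy : ∀ i ≤ n, v (y.coeff i) ≤ 1) :
    v ((x * y).coeff n) ≤
      ((Finset.range (n + 1)).sup' ⟨0, Finset.mem_range.mpr (Nat.succ_pos n)⟩ fun i => v (x.coeff i)) *
        ((Finset.range (n + 1)).sup' ⟨0, Finset.mem_range.mpr (Nat.succ_pos n)⟩ fun j => v (y.coeff j)) := by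
  classical
  set A := ((Finset.range (n + 1)).sup' ⟨0, Finset.mem_range.mpr (Nat.succ_pos n)⟩ fun i => v (x.coeff i))
    with hA
  set B := ((Finset.range (n + 1)).sup' ⟨0, Finset.mem_range.mpr (Nat.succ_pos n)⟩ fun j => v (y.coeff j))
    with hB
  have pow_le : ∀ a : Γ₀, a ≤ 1 → ∀ m : ℕ, m ≠ 0 → a ^ m ≤ a := by
    intro a ha m hm
    obtain ⟨l, rfl⟩ := Nat.exists_eq_succ_of_ne_zero hm
    calc a ^ (l + 1) = a ^ l * a := pow_succ a l
    _ ≤ 1 * a := mul_le_mul_left (pow_le_one' ha l) a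
    _ = a := one_mul a
  rw [WittVector.mul_coeff, WittVector.peval]
  set u : Fin 2 × ℕ → k := Function.uncurry ![x.coeff, y.coeff] with hu
  rw [(WittVector.wittMul p n).as_sum, map_sum]
  apply Valuation.map_sum_le
  intro d hd
  obtain ⟨i, hi⟩ := wittMul_support_exists p n 0 hd
  obtain ⟨j, hj⟩ := wittMul_support_exists p n 1 hd
  have hvar : ∀ s ∈ d.support, s.2 ≤ n := by
    intro s hs
    have hv : s ∈ (WittVector.wittMul p n).vars := (MvPolynomial.mem_vars s).2 ⟨d, hd, hs⟩
    have := WittVector.wittMul_vars p n hv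
    rw [Finset.mem_product, Finset.mem_range, Nat.lt_succ_iff] at this
    exact this.2
  have hle1 : ∀ s ∈ d.support, v (u s) ≤ 1 := by
    rintro ⟨b, m⟩ hs
    have hm : m ≤ n := hvar _ hs
    fin_cases b
    · simpa [hu, Function.uncurry] using hx m hm
    · simpa [hu, Function.uncurry] using hy m hm
  rw [MvPolynomial.aeval_monomial, v.map_mul]
  have hc : v ((algebraMap ℤ k) (coeff d (WittVector.wittMul p n))) ≤ 1 := by
    rw [algebraMap_int_eq, eq_intCast]
    exact val_intCast_le_one v _
  have hprod : v (d.prod fun s e => u s ^ e) ≤ A * B := by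
    have hmap : v (d.prod fun s e => u s ^ e)
        = ∏ s ∈ d.support, v (u s) ^ d s := by
      rw [Finsupp.prod]
      rw [map_prod]
      exact Finset.prod_congr rfl fun s _ => map_pow v (u s) (d s)
    rw [hmap]
    have hne : ((0 : Fin 2), i) ≠ ((1 : Fin 2), j) := by simp
    have hj' : ((1 : Fin 2), j) ∈ d.support.erase ((0 : Fin 2), i) :=
      Finset.mem_erase.2 ⟨hne.symm, hj⟩
    rw [← Finset.mul_prod_erase _ _ hi, ← Finset.mul_prod_erase _ _ hj']
    have h1 : v (u (0, i)) ^ d (0, i) ≤ A := by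
      refine le_trans (pow_le _ (hle1 _ hi) _ (Finsupp.mem_support_iff.mp hi)) ?_
      have : v (u ((0 : Fin 2), i)) = v (x.coeff i) := by
        simp [hu, Function.uncurry]
      rw [this, hA]
      exact Finset.le_sup' (fun i => v (x.coeff i))
        (Finset.mem_range.2 (Nat.lt_succ_of_le (hvar _ hi)))
    have h2 : v (u (1, j)) ^ d (1, j) ≤ B := by
      refine le_trans (pow_le _ (hle1 _ hj) _ (Finsupp.mem_support_iff.mp hj)) ?_
      have : v (u ((1 : Fin 2), j)) = v (y.coeff j) := by
        simp [hu, Function.uncurry]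
      rw [this, hB]
      exact Finset.le_sup' (fun j => v (y.coeff j))
        (Finset.mem_range.2 (Nat.lt_succ_of_le (hvar _ hj)))
    have h3 : (∏ s ∈ (d.support.erase ((0 : Fin 2), i)).erase ((1 : Fin 2), j),
        v (u s) ^ d s) ≤ 1 := by
      refine Finset.prod_le_one' fun s hs => pow_le_one' ?_ _
      exact hle1 s (Finset.mem_of_mem_erase (Finset.mem_of_mem_erase hs))
    calc v (u (0, i)) ^ d (0, i) * (v (u (1, j)) ^ d (1, j) *
        ∏ s ∈ (d.support.erase ((0 : Fin 2), i)).erase ((1 : Fin 2), j), v (u s) ^ d s)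
        ≤ A * (B * 1) := mul_le_mul' h1 (mul_le_mul' h2 h3)
      _ = A * B := by rw [mul_one]
  calc v ((algebraMap ℤ k) (coeff d (WittVector.wittMul p n))) *
      v (d.prod fun s e => u s ^ e) ≤ 1 * (A * B) := mul_le_mul' hc hprod
    _ = A * B := one_mul _
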